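/- Let X be a δ-hyperbolic graph (geodesic triangles are δ-thin) and let a, b, c be vertices. If the angle at c between a and b is greater than 12δ (meaning: there exist edges e1, e2 at c lying on geodesics from c to a and from c to b respectively, with angle at c between e1 and e2 greater than 12δ), then every geodesic from a to b passes through c. -/

import Mathlib

/-- A graph: vertices, oriented edges, origin/terminus maps, and a
fixed-point-free edge-reversing involution. -/
structure MGraph where
  V : Type
  E : Type
  o : E → V
  t : E → V
  rev : E → E
  rev_o : ∀ e, o (rev e) = t e
  rev_t : ∀ e, t (rev e) = o e
  rev_rev : ∀ e, rev (rev e) = e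
  rev_ne : ∀ e, rev e ≠ e

namespace MGraph

variable (X : MGraph)

/-- A walk from `x` to `y` given by a list of consecutive edges. -/
def IsWalk : List X.E → X.V → X.V → Prop
  | [], x, y => x = y
  | e :: es, x, y => X.o e = x ∧ IsWalk es (X.t e) y

/-- The vertices visited by a walk starting at `x`. -/
def walkVerts : X.V → List X.E → List X.V
  | x, [] => [x]
  | x, e :: es => x :: walkVerts (X.t e) es

/-- The graph metric (length of each edge is 1), valued in `ℕ∞`. -/
noncomputable def dist (x y : X.V) : ℕ∞ :=
  sInf {n : ℕ∞ | ∃ es, X.IsWalk es x y ∧ (es.length : ℕ∞) = n}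

/-- The distance from `x` to `y` in the graph with the vertex `v` removed. -/
noncomputable def delDist (v x y : X.V) : ℕ∞ :=
  sInf {n : ℕ∞ | ∃ es, X.IsWalk es x y ∧ v ∉ X.walkVerts x es ∧ (es.length : ℕ∞) = n}

/-- The angle at `v = t e1 = o e2` between two edges `e1, e2`: the distance
from `o e1` to `t e2` in the graph with the vertex `t e1` removed. -/
noncomputable def angle (e1 e2 : X.E) : ℕ∞ :=
  X.delDist (X.t e1) (X.o e1) (X.t e2)

/-- A geodesic is a walk whose length realizes the distance. -/
def IsGeodesic (es : List X.E) (x y : X.V) : Prop :=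
  X.IsWalk es x y ∧ (es.length : ℕ∞) = X.dist x y

/-- `∠_c(x1,x2) > θ` : there are edges `e1, e2` with `t e1 = o e2 = c`, each
lying on a geodesic between `c` and `x_i`, making an angle `> θ` at `c`. -/
def AngleGT (c x1 x2 : X.V) (θ : ℕ∞) : Prop :=
  ∃ (e1 e2 : X.E) (es1 es2 : List X.E), X.t e1 = c ∧ X.o e2 = c ∧
    X.IsGeodesic (X.rev e1 :: es1) c x1 ∧ X.IsGeodesic (e2 :: es2) c x2 ∧
    θ < X.angle e1 e2

/-- All pairs of consecutive edges of a walk make an angle at most `θ`. -/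
def AngleBounded (θ : ℕ∞) : List X.E → Prop
  | [] => True
  | [_] => True
  | e :: e' :: es => X.angle e e' ≤ θ ∧ AngleBounded θ (e' :: es)

/-- `v` is a vertex of the cone of parameter `θ` around the oriented edge `e`:
it lies on a path starting at `o e` by the edge `e`, of length at most `θ`,
whose consecutive edges make angles at most `θ`. -/
def InConeV (θ : ℕ∞) (e : X.E) (v : X.V) : Prop :=
  ∃ (es : List X.E) (y : X.V), X.IsWalk (e :: es) (X.o e) y ∧
    ((e :: es).length : ℕ∞) ≤ θ ∧ X.AngleBounded θ (e :: es) ∧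
    v ∈ X.walkVerts (X.o e) (e :: es)

/-- `ε` is an edge of the cone of parameter `θ` around the oriented edge `e`. -/
def InConeE (θ : ℕ∞) (e ε : X.E) : Prop :=
  ∃ (es : List X.E) (y : X.V), X.IsWalk (e :: es) (X.o e) y ∧
    ((e :: es).length : ℕ∞) ≤ θ ∧ X.AngleBounded θ (e :: es) ∧
    (ε ∈ e :: es ∨ X.rev ε ∈ e :: es)

/-- A graph is fine if for each edge `e` and each `L`, only finitely many
edges arrive at `o e` making an angle at most `L` with `e`. -/
def Fine : Prop :=
  ∀ (e : X.E) (L : ℕ), {e' : X.E | X.t e' = X.o e ∧ X.angle e' e ≤ (L : ℕ∞)}.Finite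

/-- δ-hyperbolicity: geodesic triangles are δ-thin. -/
def Hyperbolic (δ : ℕ) : Prop :=
  ∀ (a b c : X.V) (p q r : List X.E),
    X.IsGeodesic p a b → X.IsGeodesic q b c → X.IsGeodesic r a c →
    ∀ v ∈ X.walkVerts a p, ∃ w, (w ∈ X.walkVerts b q ∨ w ∈ X.walkVerts a r) ∧
      X.dist v w ≤ (δ : ℕ∞)

/-- The four point inequality form of δ-hyperbolicity. -/
def FourPoint (δ : ℕ) : Prop :=
  ∀ a x y y' : X.V,
    X.dist a x + X.dist y y' ≤
      max (X.dist a y + X.dist y' x) (X.dist a y' + X.dist y x) + (δ : ℕ∞)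

/-- Connectedness. -/
def Connected : Prop := ∀ x y : X.V, ∃ es, X.IsWalk es x y

/-- `t` is on an `α`-geodesic between `x` and `a`. -/
def OnAlphaGeod (α : ℕ∞) (t x a : X.V) : Prop :=
  X.dist x t + X.dist t a ≤ X.dist x a + α

/-- The set `𝓔_{a,x}(ρ)` of edges at distance `ρ` from `a` lying on
geodesics between `a` and `x`. -/
def GeodEdgeAt (a x : X.V) (ρ : ℕ∞) (e : X.E) : Prop :=
  X.dist a (X.o e) = ρ ∧ ∃ es, (X.IsGeodesic es a x ∨ X.IsGeodesic es x a) ∧ e ∈ es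

/-- The set `U_α[a,x]` of points on `α`-conical-geodesics between `x` and `a`. -/
def ConicalSet (α : ℕ) (a x : X.V) : Set X.V :=
  {t | X.OnAlphaGeod (α : ℕ∞) t x a ∧ X.dist a t ≤ X.dist a x ∧
       ∀ e, X.GeodEdgeAt a x (X.dist a t) e → X.InConeV ((40 * α : ℕ) : ℕ∞) e t}

end MGraph
namespace MGraph

variable {X : MGraph}

theorem isWalk_append {es fs : List X.E} {x y z : X.V}
    (h1 : X.IsWalk es x y) (h2 : X.IsWalk fs y z) : X.IsWalk (es ++ fs) x z := by
  induction es generalizing x with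
  | nil => obtain rfl : x = y := h1; simpa using h2
  | cons e es ih => exact ⟨h1.1, ih h1.2⟩

theorem self_mem_walkVerts (x : X.V) (es : List X.E) : x ∈ X.walkVerts x es := by
  cases es <;> simp [walkVerts]

theorem end_mem_walkVerts {es : List X.E} {x y : X.V} (h : X.IsWalk es x y) :
    y ∈ X.walkVerts x es := by
  induction es generalizing x with
  | nil => obtain rfl : x = y := h; simp [walkVerts]
  | cons e es ih => simp only [walkVerts, List.mem_cons]; exact Or.inr (ih h.2)

theorem mem_walkVerts_append {es fs : List X.E} {x y v : X.V} (h1 : X.IsWalk es x y) :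
    v ∈ X.walkVerts x (es ++ fs) ↔ v ∈ X.walkVerts x es ∨ v ∈ X.walkVerts y fs := by
  induction es generalizing x with
  | nil =>
    obtain rfl : x = y := h1
    simp only [List.nil_append, walkVerts, List.mem_singleton]
    exact ⟨Or.inr, fun h => h.elim (fun h => h ▸ self_mem_walkVerts x fs) id⟩
  | cons e es ih =>
    simp only [List.cons_append, walkVerts, List.mem_cons, List.append_eq, ih h1.2, or_assoc]

theorem dist_le_length {es : List X.E} {x y : X.V} (h : X.IsWalk es x y) :
    X.dist x y ≤ (es.length : ℕ∞) :=
  sInf_le ⟨es, h, rfl⟩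

theorem dist_self (x : X.V) : X.dist x x = 0 :=
  le_antisymm (by simpa using dist_le_length (X := X) (es := []) (x := x) (y := x) rfl)
    zero_le

theorem exists_walk_dist {x y : X.V} (hfin : X.dist x y ≠ ⊤) :
    ∃ es, X.IsWalk es x y ∧ (es.length : ℕ∞) = X.dist x y := by
  have hne : {n : ℕ∞ | ∃ es, X.IsWalk es x y ∧ (es.length : ℕ∞) = n}.Nonempty := by
    by_contra hemp
    rw [Set.not_nonempty_iff_eq_empty] at hemp
    exact hfin (by simp [dist, hemp])
  obtain ⟨es, hw, hl⟩ := csInf_mem hne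
  exact ⟨es, hw, hl⟩

theorem dist_triangle (x y z : X.V) : X.dist x z ≤ X.dist x y + X.dist y z := by
  rcases eq_or_ne (X.dist x y) ⊤ with h1 | h1
  · simp [h1]
  rcases eq_or_ne (X.dist y z) ⊤ with h2 | h2
  · simp [h2]
  obtain ⟨es, hw, hl⟩ := exists_walk_dist h1
  obtain ⟨fs, hw', hl'⟩ := exists_walk_dist h2
  calc X.dist x z ≤ (((es ++ fs)).length : ℕ∞) := dist_le_length (isWalk_append hw hw')
    _ = X.dist x y + X.dist y z := by rw [List.length_append]; push_cast; rw [hl, hl']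

def revWalk (es : List X.E) : List X.E := (es.map X.rev).reverse

@[simp] theorem length_revWalk (es : List X.E) : (revWalk (X := X) es).length = es.length := by
  simp [revWalk]

theorem isWalk_revWalk {es : List X.E} {x y : X.V} (h : X.IsWalk es x y) :
    X.IsWalk (revWalk es) y x := by
  induction es generalizing x with
  | nil => obtain rfl : x = y := h; exact rfl
  | cons e es ih =>
    have hr : revWalk (X := X) (e :: es) = revWalk es ++ [X.rev e] := by simp [revWalk]
    rw [hr]
    refine isWalk_append (ih h.2) ⟨X.rev_o e, ?_⟩
    show X.t (X.rev e) = x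
    rw [X.rev_t]; exact h.1

theorem mem_walkVerts_revWalk {es : List X.E} {x y v : X.V} (h : X.IsWalk es x y) :
    v ∈ X.walkVerts y (revWalk es) ↔ v ∈ X.walkVerts x es := by
  induction es generalizing x with
  | nil => obtain rfl : x = y := h; simp [revWalk]
  | cons e es ih =>
    have hr : revWalk (X := X) (e :: es) = revWalk es ++ [X.rev e] := by simp [revWalk]
    rw [hr, mem_walkVerts_append (isWalk_revWalk h.2)]
    simp only [walkVerts, List.mem_cons, List.mem_singleton, ih h.2, X.rev_t,
      List.not_mem_nil, or_false]
    constructor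
    · rintro (hv | hv | hv)
      · exact Or.inr hv
      · exact Or.inr (hv ▸ self_mem_walkVerts _ _)
      · exact Or.inl (hv.trans h.1)
    · rintro (hv | hv)
      · exact Or.inr (Or.inr (hv.trans h.1.symm))
      · exact Or.inl hv

theorem dist_symm_le (x y : X.V) : X.dist y x ≤ X.dist x y := by
  rcases eq_or_ne (X.dist x y) ⊤ with h | h
  · simp [h]
  obtain ⟨es, hw, hl⟩ := exists_walk_dist h
  calc X.dist y x ≤ ((revWalk (X := X) es).length : ℕ∞) := dist_le_length (isWalk_revWalk hw)
    _ = (es.length : ℕ∞) := by simp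
    _ = X.dist x y := hl

theorem dist_comm (x y : X.V) : X.dist x y = X.dist y x :=
  le_antisymm (dist_symm_le y x) (dist_symm_le x y)

theorem walk_split_mem {es : List X.E} {x y v : X.V} (h : X.IsWalk es x y)
    (hv : v ∈ X.walkVerts x es) :
    ∃ es₁ es₂, es = es₁ ++ es₂ ∧ X.IsWalk es₁ x v ∧ X.IsWalk es₂ v y := by
  induction es generalizing x with
  | nil =>
    obtain rfl : x = y := h
    simp only [walkVerts, List.mem_singleton] at hv
    obtain rfl := hv
    exact ⟨[], [], rfl, rfl, rfl⟩
  | cons e es ih =>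
    simp only [walkVerts, List.mem_cons] at hv
    rcases hv with rfl | hv
    · exact ⟨[], e :: es, rfl, rfl, h⟩
    · obtain ⟨A, B, rfl, hA, hB⟩ := ih h.2 hv
      exact ⟨e :: A, B, rfl, ⟨h.1, hA⟩, hB⟩

theorem walk_split_take {es : List X.E} {x y : X.V} (h : X.IsWalk es x y) (n : ℕ) :
    ∃ v, X.IsWalk (es.take n) x v ∧ X.IsWalk (es.drop n) v y := by
  induction es generalizing x n with
  | nil => exact ⟨x, by simp [List.take_nil]; rfl, by simp [List.drop_nil]; exact h⟩
  | cons e es ih =>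
    cases n with
    | zero => exact ⟨x, rfl, h⟩
    | succ n =>
      obtain ⟨v, h1, h2⟩ := ih h.2 n
      exact ⟨v, ⟨h.1, h1⟩, h2⟩

theorem add_dist_le_length {es : List X.E} {x y : X.V} (c : X.V) (h : X.IsWalk es x y)
    (hc : c ∈ X.walkVerts x es) :
    X.dist x c + X.dist c y ≤ (es.length : ℕ∞) := by
  obtain ⟨A, B, rfl, hA, hB⟩ := walk_split_mem h hc
  calc X.dist x c + X.dist c y ≤ ((A.length : ℕ∞)) + (B.length : ℕ∞) :=
        add_le_add (dist_le_length hA) (dist_le_length hB)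
    _ = ((A ++ B).length : ℕ∞) := by rw [List.length_append]; push_cast; ring

theorem exists_avoid_walk {c x y : X.V} (hfin : X.dist x y ≠ ⊤)
    (hlt : X.dist x y < X.dist x c + X.dist c y) :
    ∃ es, X.IsWalk es x y ∧ c ∉ X.walkVerts x es ∧ (es.length : ℕ∞) = X.dist x y := by
  obtain ⟨es, hw, hl⟩ := exists_walk_dist hfin
  refine ⟨es, hw, fun hcmem => ?_, hl⟩
  exact absurd (le_trans (add_dist_le_length c hw hcmem) hl.le) (not_le.mpr hlt)

theorem enat_force {a b : ℕ∞} {A B : ℕ} (ha : a ≤ (A : ℕ∞)) (hb : b ≤ (B : ℕ∞))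
    (hs : ((A : ℕ∞)) + (B : ℕ∞) ≤ a + b) : a = (A : ℕ∞) ∧ b = (B : ℕ∞) := by
  lift a to ℕ using ne_top_of_le_ne_top (by simp) ha
  lift b to ℕ using ne_top_of_le_ne_top (by simp) hb
  have h1 : a ≤ A := by exact_mod_cast ha
  have h2 : b ≤ B := by exact_mod_cast hb
  have h3 : A + B ≤ a + b := by exact_mod_cast hs
  constructor
  · exact_mod_cast (by omega : a = A)
  · exact_mod_cast (by omega : b = B)

theorem IsGeodesic.split {es₁ es₂ : List X.E} {x y v : X.V}
    (h : X.IsGeodesic (es₁ ++ es₂) x y) (h1 : X.IsWalk es₁ x v) (h2 : X.IsWalk es₂ v y) :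
    X.IsGeodesic es₁ x v ∧ X.IsGeodesic es₂ v y := by
  have d1 := dist_le_length h1
  have d2 := dist_le_length h2
  have hsum : ((es₁.length : ℕ∞)) + (es₂.length : ℕ∞) = X.dist x y := by
    rw [← h.2, List.length_append]; push_cast; ring
  have hforce := enat_force d1 d2 (hsum.le.trans (dist_triangle x v y))
  exact ⟨⟨h1, hforce.1.symm⟩, ⟨h2, hforce.2.symm⟩⟩

theorem start_not_mem_tail {es₁ es₂ : List X.E} {x y v : X.V}
    (h : X.IsGeodesic (es₁ ++ es₂) x y) (h1 : X.IsWalk es₁ x v) (h2 : X.IsWalk es₂ v y)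
    (hne : es₁ ≠ []) : x ∉ X.walkVerts v es₂ := by
  intro hx
  obtain ⟨B1, B2, rfl, hB1, hB2⟩ := walk_split_mem h2 hx
  have hd : X.dist x y ≤ (B2.length : ℕ∞) := dist_le_length hB2
  have hl : ((es₁ ++ (B1 ++ B2)).length : ℕ∞) = X.dist x y := h.2
  have : ((es₁ ++ (B1 ++ B2)).length : ℕ∞) ≤ (B2.length : ℕ∞) := hl.le.trans hd
  have hle : (es₁ ++ (B1 ++ B2)).length ≤ B2.length := by exact_mod_cast this
  have hpos : 0 < es₁.length := List.length_pos_iff.mpr hne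
  simp only [List.length_append] at hle
  omega

end MGraph
namespace MGraph

variable {X : MGraph}

theorem length_pos_of_ne {es : List X.E} {x y : X.V} (h : X.IsWalk es x y) (hne : x ≠ y) :
    0 < es.length := by
  rcases es with _ | ⟨e, es⟩
  · exact absurd (h : x = y) hne
  · simp

theorem exists_avoid_on_geodesic {es : List X.E} {c z u v : X.V}
    (h : X.IsGeodesic es c z) (hu : u ∈ X.walkVerts c es) (hv : v ∈ X.walkVerts c es)
    (hune : u ≠ c) (hvne : v ≠ c) :
    ∃ fs, X.IsWalk fs u v ∧ c ∉ X.walkVerts u fs ∧ (fs.length : ℕ∞) = X.dist u v := by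
  obtain ⟨A, B, rfl, hA, hB⟩ := walk_split_mem h.1 hu
  obtain ⟨hgA, hgB⟩ := IsGeodesic.split h hA hB
  have hApos : 0 < A.length := length_pos_of_ne hA (Ne.symm hune)
  have hduc : X.dist u c = (A.length : ℕ∞) := by rw [dist_comm]; exact hgA.2.symm
  rcases (mem_walkVerts_append hA).mp hv with hvA | hvB
  · -- v on the segment from c to u
    obtain ⟨A1, A2, rfl, hA1, hA2⟩ := walk_split_mem hA hvA
    obtain ⟨hgA1, hgA2⟩ := IsGeodesic.split hgA hA1 hA2
    have hA1pos : 0 < A1.length := length_pos_of_ne hA1 (Ne.symm hvne)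
    have hduv : X.dist u v = (A2.length : ℕ∞) := by rw [dist_comm]; exact hgA2.2.symm
    have hfin : X.dist u v ≠ ⊤ := by rw [hduv]; simp
    have hlt : X.dist u v < X.dist u c + X.dist c v := by
      rw [hduv, hduc, ← hgA1.2, List.length_append]
      exact_mod_cast (by omega : A2.length < A1.length + A2.length + A1.length)
    exact exists_avoid_walk hfin hlt
  · -- v on the segment from u to z
    obtain ⟨B1, B2, rfl, hB1, hB2⟩ := walk_split_mem hB hvB
    obtain ⟨hgB1, hgB2⟩ := IsGeodesic.split hgB hB1 hB2
    have hgAB1 : X.IsGeodesic (A ++ B1) c v := by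
      have h' : X.IsGeodesic ((A ++ B1) ++ B2) c z := by rwa [List.append_assoc]
      exact (IsGeodesic.split h' (isWalk_append hA hB1) hB2).1
    have hduv : X.dist u v = (B1.length : ℕ∞) := hgB1.2.symm
    have hfin : X.dist u v ≠ ⊤ := by rw [hduv]; simp
    have hlt : X.dist u v < X.dist u c + X.dist c v := by
      rw [hduv, hduc, ← hgAB1.2, List.length_append]
      exact_mod_cast (by omega : B1.length < A.length + (A.length + B1.length))
    exact exists_avoid_walk hfin hlt

theorem exists_segment_on_geodesic {es : List X.E} {x z u v : X.V}
    (h : X.IsGeodesic es x z) (hu : u ∈ X.walkVerts x es) (hv : v ∈ X.walkVerts x es) :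
    ∃ fs, X.IsWalk fs u v ∧ (∀ w ∈ X.walkVerts u fs, w ∈ X.walkVerts x es) ∧
      (fs.length : ℕ∞) = X.dist u v := by
  obtain ⟨A, B, rfl, hA, hB⟩ := walk_split_mem h.1 hu
  obtain ⟨hgA, hgB⟩ := IsGeodesic.split h hA hB
  rcases (mem_walkVerts_append hA).mp hv with hvA | hvB
  · obtain ⟨A1, A2, rfl, hA1, hA2⟩ := walk_split_mem hA hvA
    obtain ⟨hgA1, hgA2⟩ := IsGeodesic.split hgA hA1 hA2
    refine ⟨revWalk A2, isWalk_revWalk hA2, ?_, ?_⟩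
    · intro w hw
      have hwA2 : w ∈ X.walkVerts v A2 := (mem_walkVerts_revWalk hA2).mp hw
      have : w ∈ X.walkVerts x (A1 ++ A2) := (mem_walkVerts_append hA1).mpr (Or.inr hwA2)
      exact (mem_walkVerts_append hA).mpr (Or.inl this)
    · rw [length_revWalk, dist_comm]; exact hgA2.2
  · obtain ⟨B1, B2, rfl, hB1, hB2⟩ := walk_split_mem hB hvB
    obtain ⟨hgB1, hgB2⟩ := IsGeodesic.split hgB hB1 hB2
    refine ⟨B1, hB1, ?_, hgB1.2⟩
    intro w hw
    have : w ∈ X.walkVerts u (B1 ++ B2) := (mem_walkVerts_append hB1).mpr (Or.inl hw)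
    exact (mem_walkVerts_append hA).mpr (Or.inr this)

end MGraph
open MGraph in
theorem stmt_1 (X : MGraph) (δ : ℕ) (hδpos : 0 < δ) (hδ : X.Hyperbolic δ)
    (a b c : X.V) (h : X.AngleGT c a b ((12 * δ : ℕ) : ℕ∞)) :
    ∀ es : List X.E, X.IsGeodesic es a b → c ∈ X.walkVerts a es := by
  intro g hg
  by_contra hc
  obtain ⟨e1, e2, es1, es2, he1c, he2c, hp, hq, hangle⟩ := h
  set p := X.rev e1 :: es1 with hpdef
  set q := e2 :: es2 with hqdef
  have hplen : p.length = es1.length + 1 := by rw [hpdef]; rfl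
  have hqlen : q.length = es2.length + 1 := by rw [hqdef]; rfl
  set t0 := min p.length (2 * δ) with ht0def
  set s0 := min q.length (2 * δ) with hs0def
  -- the point x on p at distance t0 from c
  obtain ⟨x, hpx1, hpx2⟩ := walk_split_take hp.1 t0
  have hp' : X.IsGeodesic (p.take t0 ++ p.drop t0) c a := by
    rw [List.take_append_drop]; exact hp
  obtain ⟨hgx1, _⟩ := IsGeodesic.split hp' hpx1 hpx2
  have htake_len : (p.take t0).length = t0 := by rw [List.length_take]; omega
  have hdcx : X.dist c x = (t0 : ℕ∞) := by rw [← hgx1.2, htake_len]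
  have hxmem : x ∈ X.walkVerts c p := by
    have := (mem_walkVerts_append (fs := p.drop t0) hpx1).mpr (Or.inl (end_mem_walkVerts hpx1))
    rwa [List.take_append_drop] at this
  have hxnec : x ≠ c := by
    rintro rfl
    rw [MGraph.dist_self] at hdcx
    have : t0 = 0 := by exact_mod_cast hdcx.symm
    omega
  -- the point y on q at distance s0 from c
  obtain ⟨y, hqy1, hqy2⟩ := walk_split_take hq.1 s0
  have hq' : X.IsGeodesic (q.take s0 ++ q.drop s0) c b := by
    rw [List.take_append_drop]; exact hq
  obtain ⟨hgy1, _⟩ := IsGeodesic.split hq' hqy1 hqy2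
  have htake_len' : (q.take s0).length = s0 := by rw [List.length_take]; omega
  have hdcy : X.dist c y = (s0 : ℕ∞) := by rw [← hgy1.2, htake_len']
  have hymem : y ∈ X.walkVerts c q := by
    have := (mem_walkVerts_append (fs := q.drop s0) hqy1).mpr (Or.inl (end_mem_walkVerts hqy1))
    rwa [List.take_append_drop] at this
  have hynec : y ≠ c := by
    rintro rfl
    rw [MGraph.dist_self] at hdcy
    have : s0 = 0 := by exact_mod_cast hdcy.symm
    omega
  -- the piece A of p from (o e1) to x
  obtain ⟨t0', ht0'⟩ : ∃ k, t0 = k + 1 := ⟨t0 - 1, by omega⟩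
  have htakeA : p.take t0 = X.rev e1 :: es1.take t0' := by
    rw [ht0', hpdef, List.take_succ_cons]
  have hA : X.IsWalk (es1.take t0') (X.o e1) x := by
    have h' := hpx1
    rw [htakeA] at h'
    have h2 := h'.2
    rwa [X.rev_t] at h2
  have hAavoid : c ∉ X.walkVerts (X.o e1) (es1.take t0') := by
    have hgeo : X.IsGeodesic ([X.rev e1] ++ es1.take t0') c x := by
      have heq : [X.rev e1] ++ es1.take t0' = p.take t0 := by rw [htakeA, List.singleton_append]
      rw [heq]; exact hgx1
    exact start_not_mem_tail hgeo ⟨(X.rev_o e1).trans he1c, X.rev_t e1⟩ hA (by simp)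
  have hAlen : (es1.take t0').length + 1 ≤ 2 * δ := by rw [List.length_take]; omega
  -- the piece B0 of q from (t e2) to y
  obtain ⟨s0', hs0'⟩ : ∃ k, s0 = k + 1 := ⟨s0 - 1, by omega⟩
  have htakeB : q.take s0 = e2 :: es2.take s0' := by
    rw [hs0', hqdef, List.take_succ_cons]
  have hB0 : X.IsWalk (es2.take s0') (X.t e2) y := by
    have h' := hqy1
    rw [htakeB] at h'
    exact h'.2
  have hB0avoid : c ∉ X.walkVerts (X.t e2) (es2.take s0') := by
    have hgeo : X.IsGeodesic ([e2] ++ es2.take s0') c y := by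
      have heq : [e2] ++ es2.take s0' = q.take s0 := by rw [htakeB, List.singleton_append]
      rw [heq]; exact hgy1
    exact start_not_mem_tail hgeo ⟨he2c, rfl⟩ hB0 (by simp)
  have hB0len : (es2.take s0').length + 1 ≤ 2 * δ := by rw [List.length_take]; omega
  have hB : X.IsWalk (revWalk (es2.take s0')) y (X.t e2) := isWalk_revWalk hB0
  have hBavoid : c ∉ X.walkVerts y (revWalk (es2.take s0')) := fun hm =>
    hB0avoid ((mem_walkVerts_revWalk hB0).mp hm)
  -- thinness at x and y
  obtain ⟨w, hwor, hwdist⟩ := hδ c a b p g q hp hg hq x hxmem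
  have hgr : X.IsGeodesic (revWalk g) b a := by
    refine ⟨isWalk_revWalk hg.1, ?_⟩
    rw [length_revWalk, hg.2, MGraph.dist_comm]
  obtain ⟨w', hw'or0, hw'dist⟩ := hδ c b a q (revWalk g) p hq hgr hp y hymem
  have hw'or : w' ∈ X.walkVerts a g ∨ w' ∈ X.walkVerts c p := by
    rcases hw'or0 with h' | h'
    · exact Or.inl ((mem_walkVerts_revWalk hg.1).mp h')
    · exact Or.inr h'
  -- the jump at x
  have hxpkg : ∃ J w, X.IsWalk J x w ∧ c ∉ X.walkVerts x J ∧ J.length ≤ δ ∧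
      (w ∈ X.walkVerts a g ∨ w ∈ X.walkVerts c q) ∧ w ≠ c ∧
      X.dist c w ≤ ((3 * δ : ℕ) : ℕ∞) := by
    rcases le_or_gt p.length (2 * δ) with hca | hca
    · -- x = a
      have hxa : x = a := by
        have hd : p.drop t0 = [] := List.drop_eq_nil_of_le (by omega)
        rw [hd] at hpx2
        exact hpx2
      refine ⟨[], x, rfl, ?_, by simp, Or.inl (hxa ▸ self_mem_walkVerts a g), hxnec, ?_⟩
      · simp only [walkVerts, List.mem_singleton]
        exact Ne.symm hxnec
      · rw [hdcx]
        exact_mod_cast (by omega : t0 ≤ 3 * δ)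
    · have ht02 : t0 = 2 * δ := by omega
      have hdxc : X.dist x c = ((2 * δ : ℕ) : ℕ∞) := by rw [MGraph.dist_comm, hdcx, ht02]
      have hwnec : w ≠ c := by
        rintro rfl
        rw [hdxc] at hwdist
        have : 2 * δ ≤ δ := by exact_mod_cast hwdist
        omega
      have hfin : X.dist x w ≠ ⊤ := ne_top_of_le_ne_top (by simp) hwdist
      have hlt : X.dist x w < X.dist x c + X.dist c w := by
        calc X.dist x w ≤ (δ : ℕ∞) := hwdist
          _ < ((2 * δ : ℕ) : ℕ∞) := by exact_mod_cast (by omega : δ < 2 * δ)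
          _ = X.dist x c := hdxc.symm
          _ ≤ X.dist x c + X.dist c w := le_self_add
      obtain ⟨J, hJ, hJav, hJlen⟩ := exists_avoid_walk hfin hlt
      refine ⟨J, w, hJ, hJav, ?_, hwor, hwnec, ?_⟩
      · exact_mod_cast hJlen.le.trans hwdist
      · calc X.dist c w ≤ X.dist c x + X.dist x w := dist_triangle c x w
          _ ≤ (t0 : ℕ∞) + (δ : ℕ∞) := by rw [hdcx]; exact add_le_add_right hwdist _
          _ ≤ ((3 * δ : ℕ) : ℕ∞) := by exact_mod_cast (by omega : t0 + δ ≤ 3 * δ)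
  -- the jump at y
  have hypkg : ∃ J' w', X.IsWalk J' w' y ∧ c ∉ X.walkVerts w' J' ∧ J'.length ≤ δ ∧
      (w' ∈ X.walkVerts a g ∨ w' ∈ X.walkVerts c p) ∧ w' ≠ c ∧
      X.dist c w' ≤ ((3 * δ : ℕ) : ℕ∞) := by
    rcases le_or_gt q.length (2 * δ) with hcb | hcb
    · -- y = b
      have hyb : y = b := by
        have hd : q.drop s0 = [] := List.drop_eq_nil_of_le (by omega)
        rw [hd] at hqy2
        exact hqy2
      refine ⟨[], y, rfl, ?_, by simp, Or.inl (hyb ▸ end_mem_walkVerts hg.1), hynec, ?_⟩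
      · simp only [walkVerts, List.mem_singleton]
        exact Ne.symm hynec
      · rw [hdcy]
        exact_mod_cast (by omega : s0 ≤ 3 * δ)
    · have hs02 : s0 = 2 * δ := by omega
      have hw'nec : w' ≠ c := by
        rintro rfl
        rw [MGraph.dist_comm, hdcy, hs02] at hw'dist
        have : 2 * δ ≤ δ := by exact_mod_cast hw'dist
        omega
      have hw'd2 : X.dist w' y ≤ (δ : ℕ∞) := by rw [MGraph.dist_comm]; exact hw'dist
      have hfin : X.dist w' y ≠ ⊤ := ne_top_of_le_ne_top (by simp) hw'd2
      have hlt : X.dist w' y < X.dist w' c + X.dist c y := by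
        calc X.dist w' y ≤ (δ : ℕ∞) := hw'd2
          _ < ((2 * δ : ℕ) : ℕ∞) := by exact_mod_cast (by omega : δ < 2 * δ)
          _ = X.dist c y := by rw [hdcy, hs02]
          _ ≤ X.dist w' c + X.dist c y := le_add_self
      obtain ⟨J', hJ', hJ'av, hJ'len⟩ := exists_avoid_walk hfin hlt
      refine ⟨J', w', hJ', hJ'av, ?_, hw'or, hw'nec, ?_⟩
      · exact_mod_cast hJ'len.le.trans hw'd2
      · calc X.dist c w' ≤ X.dist c y + X.dist y w' := dist_triangle c y w'
          _ ≤ (s0 : ℕ∞) + (δ : ℕ∞) := by rw [hdcy]; exact add_le_add_right hw'dist _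
          _ ≤ ((3 * δ : ℕ) : ℕ∞) := by exact_mod_cast (by omega : s0 + δ ≤ 3 * δ)
  obtain ⟨J, w, hJ, hJav, hJlen, hwor2, hwnec, hwd⟩ := hxpkg
  obtain ⟨J', w', hJ', hJ'av, hJ'len, hw'or2, hw'nec, hw'd⟩ := hypkg
  -- the middle walk M from x to y avoiding c
  have hM : ∃ M, X.IsWalk M x y ∧ c ∉ X.walkVerts x M ∧ M.length ≤ 8 * δ + 2 := by
    rcases hwor2 with hwg | hwq
    · rcases hw'or2 with hw'g | hw'p
      · -- both w, w' on g
        obtain ⟨fs, hfs, hfsub, hfslen⟩ := exists_segment_on_geodesic hg hwg hw'g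
        have hfsavoid : c ∉ X.walkVerts w fs := fun hm => hc (hfsub c hm)
        have hfsN : fs.length ≤ 6 * δ := by
          have hb : X.dist w w' ≤ ((6 * δ : ℕ) : ℕ∞) := by
            calc X.dist w w' ≤ X.dist w c + X.dist c w' := dist_triangle w c w'
              _ ≤ ((3 * δ : ℕ) : ℕ∞) + ((3 * δ : ℕ) : ℕ∞) :=
                  add_le_add (by rw [MGraph.dist_comm]; exact hwd) hw'd
              _ = ((6 * δ : ℕ) : ℕ∞) := by push_cast; ring
          exact_mod_cast hfslen.le.trans hb
        refine ⟨J ++ (fs ++ J'), isWalk_append hJ (isWalk_append hfs hJ'), ?_, ?_⟩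
        · intro hm
          rcases (mem_walkVerts_append hJ).mp hm with h' | h'
          · exact hJav h'
          rcases (mem_walkVerts_append hfs).mp h' with h'' | h''
          · exact hfsavoid h''
          · exact hJ'av h''
        · simp only [List.length_append]; omega
      · -- w' on p
        obtain ⟨fs, hfs, hfsav, hfslen⟩ := exists_avoid_on_geodesic hp hxmem hw'p hxnec hw'nec
        have hfsN : fs.length ≤ 5 * δ := by
          have hb : X.dist x w' ≤ ((5 * δ : ℕ) : ℕ∞) := by
            calc X.dist x w' ≤ X.dist x c + X.dist c w' := dist_triangle x c w'
              _ ≤ ((2 * δ : ℕ) : ℕ∞) + ((3 * δ : ℕ) : ℕ∞) := by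
                  refine add_le_add ?_ hw'd
                  rw [MGraph.dist_comm, hdcx]
                  exact_mod_cast (by omega : t0 ≤ 2 * δ)
              _ = ((5 * δ : ℕ) : ℕ∞) := by push_cast; ring
          exact_mod_cast hfslen.le.trans hb
        refine ⟨fs ++ J', isWalk_append hfs hJ', ?_, ?_⟩
        · intro hm
          rcases (mem_walkVerts_append hfs).mp hm with h' | h'
          · exact hfsav h'
          · exact hJ'av h'
        · simp only [List.length_append]; omega
    · -- w on q
      obtain ⟨fs, hfs, hfsav, hfslen⟩ := exists_avoid_on_geodesic hq hwq hymem hwnec hynec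
      have hfsN : fs.length ≤ 5 * δ := by
        have hb : X.dist w y ≤ ((5 * δ : ℕ) : ℕ∞) := by
          calc X.dist w y ≤ X.dist w c + X.dist c y := dist_triangle w c y
            _ ≤ ((3 * δ : ℕ) : ℕ∞) + ((2 * δ : ℕ) : ℕ∞) := by
                refine add_le_add (by rw [MGraph.dist_comm]; exact hwd) ?_
                rw [hdcy]
                exact_mod_cast (by omega : s0 ≤ 2 * δ)
            _ = ((5 * δ : ℕ) : ℕ∞) := by push_cast; ring
        exact_mod_cast hfslen.le.trans hb
      refine ⟨J ++ fs, isWalk_append hJ hfs, ?_, ?_⟩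
      · intro hm
        rcases (mem_walkVerts_append hJ).mp hm with h' | h'
        · exact hJav h'
        · exact hfsav h'
      · simp only [List.length_append]; omega
  obtain ⟨M, hM1, hM2, hM3⟩ := hM
  -- assemble the full walk from (o e1) to (t e2) avoiding c
  have hWwalk : X.IsWalk (es1.take t0' ++ (M ++ revWalk (es2.take s0'))) (X.o e1) (X.t e2) :=
    isWalk_append hA (isWalk_append hM1 hB)
  have hWav : c ∉ X.walkVerts (X.o e1) (es1.take t0' ++ (M ++ revWalk (es2.take s0'))) := by
    intro hm
    rcases (mem_walkVerts_append hA).mp hm with h' | h'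
    · exact hAavoid h'
    rcases (mem_walkVerts_append hM1).mp h' with h'' | h''
    · exact hM2 h''
    · exact hBavoid h''
  have hWlen : (es1.take t0' ++ (M ++ revWalk (es2.take s0'))).length ≤ 12 * δ := by
    simp only [List.length_append, length_revWalk]
    omega
  have hdel : X.delDist c (X.o e1) (X.t e2) ≤ ((12 * δ : ℕ) : ℕ∞) := by
    refine le_trans (sInf_le ⟨_, hWwalk, hWav, rfl⟩) ?_
    exact_mod_cast hWlen
  have hgt : ((12 * δ : ℕ) : ℕ∞) < X.delDist c (X.o e1) (X.t e2) := by
    have h' := hangle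
    simp only [MGraph.angle] at h'
    rwa [he1c] at h'
  exact absurd hdel (not_le.mpr hgt)
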